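/- For positive integers k, n, s: H_k^{(s)}(x_1,...,x_n) satisfies the recurrence H_k^{(s)}(x_1,...,x_n) = (-x_n)^{s+1} H_{k-s-1}^{(s)}(x_1,...,x_n) + H_k^{(s)}(x_1,...,x_{n-1}) + x_n H_{k-1}^{(s)}(x_1,...,x_{n-1}). -/

import Mathlib

/-- Generating series of the generalized complete symmetric functions. -/
noncomputable def HgS (s n : ℕ) (x : Fin n → ℂ) : PowerSeries ℂ :=
  ∏ i, (∑ j ∈ Finset.range (s + 1), PowerSeries.C ((-x i) ^ j) * PowerSeries.X ^ j)⁻¹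

/-- `H_k^{(s)}(x₁,…,xₙ)` with the convention that it vanishes for negative index `k`. -/
noncomputable def Hg (s n : ℕ) (x : Fin n → ℂ) (k : ℤ) : ℂ :=
  if k < 0 then 0 else PowerSeries.coeff k.toNat (HgS s n x)

lemma hg_sum_eq (s : ℕ) (a : ℂ) :
    (∑ j ∈ Finset.range (s + 1), PowerSeries.C ((-a) ^ j) * PowerSeries.X ^ j)
      = ∑ j ∈ Finset.range (s + 1), (PowerSeries.C (-a) * PowerSeries.X) ^ j := by
  refine Finset.sum_congr rfl fun j _ => ?_
  rw [mul_pow, map_pow]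

lemma hg_key (s n : ℕ) (x : Fin (n + 1) → ℂ) :
    (1 - PowerSeries.C ((-x (Fin.last n)) ^ (s + 1)) * PowerSeries.X ^ (s + 1)) *
        HgS s (n + 1) x
      = (1 + PowerSeries.C (x (Fin.last n)) * PowerSeries.X) *
          HgS s n (x ∘ Fin.castSucc) := by
  set a := x (Fin.last n) with ha
  set y : PowerSeries ℂ := PowerSeries.C (-a) * PowerSeries.X with hy
  set f : PowerSeries ℂ := ∑ j ∈ Finset.range (s + 1),
      PowerSeries.C ((-a) ^ j) * PowerSeries.X ^ j with hf
  have hfy : f = ∑ j ∈ Finset.range (s + 1), y ^ j := hg_sum_eq s a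
  have hconst : PowerSeries.constantCoeff f ≠ 0 := by
    rw [hfy]
    have : (PowerSeries.constantCoeff) (∑ j ∈ Finset.range (s + 1), y ^ j)
        = ∑ j ∈ Finset.range (s + 1), ((-a) * 0) ^ j := by
      rw [map_sum]
      refine Finset.sum_congr rfl fun j _ => ?_
      rw [map_pow, hy, map_mul, PowerSeries.constantCoeff_C, PowerSeries.constantCoeff_X]
    rw [this]
    rw [Finset.sum_eq_single 0 (fun b _ hb => by simp [zero_pow hb]) (by simp)]
    simp
  have hfinv : f * f⁻¹ = 1 := PowerSeries.mul_inv_cancel _ hconst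
  have hgeom : f * (1 - y) = 1 - y ^ (s + 1) := by
    rw [hfy]
    have := geom_sum_mul y (s + 1)
    linear_combination -this
  have hprod : HgS s (n + 1) x = HgS s n (x ∘ Fin.castSucc) * f⁻¹ := by
    rw [HgS, Fin.prod_univ_castSucc, HgS]
    rfl
  have hy1 : 1 - y = 1 + PowerSeries.C a * PowerSeries.X := by
    rw [hy, map_neg]; ring
  have hys : y ^ (s + 1) = PowerSeries.C ((-a) ^ (s + 1)) * PowerSeries.X ^ (s + 1) := by
    rw [hy, mul_pow, map_pow]
  rw [hprod, ← hys, ← hy1]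
  calc (1 - y ^ (s + 1)) * (HgS s n (x ∘ Fin.castSucc) * f⁻¹)
      = (f * (1 - y)) * (HgS s n (x ∘ Fin.castSucc) * f⁻¹) := by rw [hgeom]
    _ = ((1 - y) * HgS s n (x ∘ Fin.castSucc)) * (f * f⁻¹) := by ring
    _ = (1 - y) * HgS s n (x ∘ Fin.castSucc) := by rw [hfinv, mul_one]

/-- `H_k^{(s)}(x₁,…,xₙ) = (-xₙ)^{s+1} H_{k-s-1}^{(s)}(x₁,…,xₙ)
 + H_k^{(s)}(x₁,…,x_{n-1}) + xₙ H_{k-1}^{(s)}(x₁,…,x_{n-1})`,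
stated with `n + 1` variables. -/
theorem stmt17 (k n s : ℕ) (hk : 0 < k) (hs : 0 < s) (x : Fin (n + 1) → ℂ) :
    Hg s (n + 1) x (k : ℤ) =
      (-x (Fin.last n)) ^ (s + 1) * Hg s (n + 1) x ((k : ℤ) - s - 1) +
        Hg s n (x ∘ Fin.castSucc) (k : ℤ) +
        x (Fin.last n) * Hg s n (x ∘ Fin.castSucc) ((k : ℤ) - 1) := by
  have hkey := congrArg (PowerSeries.coeff k) (hg_key s n x)
  set a := x (Fin.last n)
  rw [sub_mul, add_mul, one_mul, one_mul, map_sub, map_add] at hkey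
  rw [mul_assoc, PowerSeries.coeff_C_mul, mul_comm (PowerSeries.X ^ (s+1)),
    PowerSeries.coeff_mul_X_pow', mul_assoc, PowerSeries.coeff_C_mul,
    mul_comm PowerSeries.X, ← pow_one (PowerSeries.X : PowerSeries ℂ),
    PowerSeries.coeff_mul_X_pow'] at hkey
  have h1 : Hg s (n + 1) x (k : ℤ) = PowerSeries.coeff k (HgS s (n + 1) x) := by
    simp [Hg]
  have h2 : Hg s n (x ∘ Fin.castSucc) (k : ℤ)
      = PowerSeries.coeff k (HgS s n (x ∘ Fin.castSucc)) := by
    simp [Hg]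
  have h4 : Hg s n (x ∘ Fin.castSucc) ((k : ℤ) - 1)
      = PowerSeries.coeff (k - 1) (HgS s n (x ∘ Fin.castSucc)) := by
    have : ¬ ((k : ℤ) - 1 < 0) := by omega
    have ht : ((k : ℤ) - 1).toNat = k - 1 := by omega
    rw [Hg, if_neg this, ht]
  have h41 : 1 ≤ k := hk
  rw [if_pos h41] at hkey
  by_cases hc : s + 1 ≤ k
  · rw [if_pos hc] at hkey
    have h3 : Hg s (n + 1) x ((k : ℤ) - s - 1)
        = PowerSeries.coeff (k - (s + 1)) (HgS s (n + 1) x) := by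
      have : ¬ ((k : ℤ) - s - 1 < 0) := by omega
      have ht : ((k : ℤ) - ↑s - 1).toNat = k - (s + 1) := by omega
      rw [Hg, if_neg this, ht]
    rw [h1, h2, h3, h4]
    linear_combination hkey
  · rw [if_neg hc] at hkey
    have h3 : Hg s (n + 1) x ((k : ℤ) - s - 1) = 0 := by
      rw [Hg, if_pos (by omega)]
    rw [h1, h2, h3, h4]
    linear_combination hkey
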